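/- (Harder–Narasimhan lemma.) Let V be an r-dimensional complex vector space, 𝐅 ∈ Flag(V)^s an s-tuple of complete flags on V, and θ = (θ_l)_{l∈[s]} ∈ (ℝ^r)^s such that each θ_l is weakly increasing. Let m_* := min{ slope_θ(W,𝐅) : W a nonzero linear subspace of V } and d_* := max{ dim W : W a nonzero linear subspace of V with slope_θ(W,𝐅) = m_* }. Then there exists a unique linear subspace W_* of V with slope_θ(W_*,𝐅) = m_* and dim W_* = d_*. -/

import Mathlib

open Module

noncomputable section

/-- A complete flag on `ℂ^m`: an increasing family of subspaces with
`dim (F i) = i + 1` (`0`-based indexing, so `F i` is the `i+1`-st step). -/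
structure Flagg (m : ℕ) where
  F : Fin m → Submodule ℂ (Fin m → ℂ)
  mono : Monotone F
  rank_eq : ∀ i : Fin m, finrank ℂ (F i) = (i : ℕ) + 1

/-- An `s`-tuple `J` of (strictly increasing) maps `[d] → [r]` is *intersecting* if
for every `s`-tuple of complete flags on `ℂ^r` the corresponding intersection of
Schubert varieties in the Grassmannian `Gr(d, ℂ^r)` is nonempty. -/
def Intersecting {s d r : ℕ} (J : Fin s → Fin d → Fin r) : Prop :=
  ∀ F : Fin s → Flagg r, ∃ V : Submodule ℂ (Fin r → ℂ), finrank ℂ V = d ∧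
    ∀ (l : Fin s) (k : Fin d), (k : ℕ) + 1 ≤ finrank ℂ ↥(V ⊓ (F l).F (J l k))

/-- `dim I = ∑_j (I(j) - j)`. -/
def dimI {d r : ℕ} (J : Fin d → Fin r) : ℤ := ∑ k, ((J k : ℤ) - (k : ℤ))

/-- Expected dimension of a tuple `J ∈ Subsets(d,r,s)`. -/
def edim {s d r : ℕ} (J : Fin s → Fin d → Fin r) : ℤ :=
  (d : ℤ) * ((r : ℤ) - (d : ℤ)) - ∑ l, ((d : ℤ) * ((r : ℤ) - (d : ℤ)) - dimI (J l))

/-- `dim` for raw `ℕ`-valued increasing sequences. -/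
def dimN {d : ℕ} (f : Fin d → ℕ) : ℤ := ∑ k, ((f k : ℤ) - (k : ℤ))

/-- Expected dimension for raw `ℕ`-valued tuples, with ambient dimension `n` explicit. -/
def edimN {s d : ℕ} (n : ℕ) (f : Fin s → Fin d → ℕ) : ℤ :=
  (d : ℤ) * ((n : ℤ) - (d : ℤ)) - ∑ l, ((d : ℤ) * ((n : ℤ) - (d : ℤ)) - dimN (f l))

/-- `T(Λ) = ∑_l ∑_j Λ_l(j)`. -/
def TT {s r : ℕ} (Λ : Fin s → Fin r → ℝ) : ℝ := ∑ l, ∑ j, Λ l j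

/-- `T_J(Λ) = ∑_l ∑_{j ∈ J_l} Λ_l(j)`. -/
def TJ {s d r : ℕ} (J : Fin s → Fin d → Fin r) (Λ : Fin s → Fin r → ℝ) : ℝ :=
  ∑ l, ∑ k, Λ l (J l k)

/-- `Γ(J)_l(k) = k - J_l(k) + (r - d)`, a weakly decreasing real `d`-tuple. -/
def GammaT {s d r : ℕ} (J : Fin s → Fin d → Fin r) : Fin s → Fin d → ℝ :=
  fun l k => (k : ℝ) - (J l k : ℝ) + ((r : ℝ) - (d : ℝ))

/-- Membership of `(Λ, t)` in the Kirwan cone `𝒦(r,s)`: each `Λ_l` is weakly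
decreasing and there are Hermitian matrices `A_1, …, A_s` summing to `t·I_r`
whose decreasingly-ordered spectra are the `Λ_l`. -/
def KirwanMem {s r : ℕ} (Λ : Fin s → Fin r → ℝ) (t : ℝ) : Prop :=
  (∀ l, Antitone (Λ l)) ∧
  ∃ (A : Fin s → Matrix (Fin r) (Fin r) ℂ) (hA : ∀ l, (A l).IsHermitian),
    (∑ l, A l) = (t : ℂ) • (1 : Matrix (Fin r) (Fin r) ℂ) ∧
    ∀ l, ∃ e : Equiv.Perm (Fin r), ∀ i, Λ l i = (hA l).eigenvalues (e i)

/-- The subspace of a flag with `k` elements (so `flagAt G 0 = ⊥`). -/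
def flagAt {m : ℕ} (G : Flagg m) : ℕ → Submodule ℂ (Fin m → ℂ)
  | 0 => ⊥
  | (k + 1) => if h : k < m then G.F ⟨k, h⟩ else ⊤

/-- The space `ℒ_I(F,G)` of linear maps `φ : ℂ^r → ℂ^q` with
`φ(F_l(j)) ⊆ G_l(I_l(j) - j)` for all `l, j`. -/
def LSpace {s r q : ℕ} (I : Fin s → Fin r → ℕ) (F : Fin s → Flagg r) (G : Fin s → Flagg q) :
    Submodule ℂ ((Fin r → ℂ) →ₗ[ℂ] (Fin q → ℂ)) where
  carrier := {φ | ∀ (l : Fin s) (j : Fin r), ∀ v ∈ (F l).F j,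
    φ v ∈ flagAt (G l) (I l j - (j : ℕ))}
  add_mem' := by
    intro a b ha hb l j v hv
    simpa using add_mem (ha l j v hv) (hb l j v hv)
  zero_mem' := by
    intro l j v hv
    simp
  smul_mem' := by
    intro c a ha l j v hv
    simpa using Submodule.smul_mem _ c (ha l j v hv)

/-- The true dimension `tdim I`, for a raw tuple `I ∈ Subsets(r, r + q, s)`
(here `q = n - r`). -/
def tdim {s : ℕ} (r q : ℕ) (I : Fin s → Fin r → ℕ) : ℕ :=
  sInf {m : ℕ | ∃ (F : Fin s → Flagg r) (G : Fin s → Flagg q), finrank ℂ (LSpace I F G) = m}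

/-- The kernel dimension `kdim I`. -/
def kdim {s : ℕ} (r q : ℕ) (I : Fin s → Fin r → ℕ) : ℕ :=
  sInf {m : ℕ | ∃ (F : Fin s → Flagg r) (G : Fin s → Flagg q)
      (φ : (Fin r → ℂ) →ₗ[ℂ] (Fin q → ℂ)), φ ∈ LSpace I F G ∧
      finrank ℂ (LSpace I F G) = tdim r q I ∧ finrank ℂ (LinearMap.ker φ) = m}

/-- The (`0`-based) Schubert position of a subspace `W` w.r.t. a flag:
`posN Fl W k` is the least `j` with `dim (Fl(j) ⊓ W) = k + 1`. -/
def posN {m : ℕ} (Fl : Flagg m) (W : Submodule ℂ (Fin m → ℂ)) (k : ℕ) : ℕ :=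
  sInf {j : ℕ | ∃ h : j < m, finrank ℂ ↥(Fl.F ⟨j, h⟩ ⊓ W) = k + 1}

/-- The (`0`-based, `ℕ`-valued) kernel position `kPos(I)_l(k)`. -/
def kPosFun {s : ℕ} (r q : ℕ) (I : Fin s → Fin r → ℕ) (l : Fin s) (k : ℕ) : ℕ :=
  sInf {p : ℕ | ∃ (F : Fin s → Flagg r) (G : Fin s → Flagg q)
      (φ : (Fin r → ℂ) →ₗ[ℂ] (Fin q → ℂ)), φ ∈ LSpace I F G ∧
      finrank ℂ (LSpace I F G) = tdim r q I ∧
      finrank ℂ (LinearMap.ker φ) = kdim r q I ∧ posN (F l) (LinearMap.ker φ) k = p}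

/-- Apply an `r`-tuple of reals at a natural index (junk value `0` out of range). -/
def applyI {r : ℕ} (f : Fin r → ℝ) (j : ℕ) : ℝ := if h : j < r then f ⟨j, h⟩ else 0

/-- Apply an `r`-tuple of naturals at a natural index (junk value `0` out of range). -/
def applyN {r : ℕ} (f : Fin r → ℕ) (j : ℕ) : ℕ := if h : j < r then f ⟨j, h⟩ else 0

/-- The slope `slope_θ(J) = (1/d) ∑_l ∑_{j ∈ J_l} θ_l(j)` of a tuple. -/
def slopeT {s d r : ℕ} (θ : Fin s → Fin r → ℝ) (J : Fin s → Fin d → Fin r) : ℝ :=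
  ((d : ℝ))⁻¹ * ∑ l, ∑ k, θ l (J l k)

/-- The slope `slope_θ(W, F) = slope_θ(Pos(W, F))` of a (nonzero) subspace. -/
def slopeW {s r : ℕ} (θ : Fin s → Fin r → ℝ) (F : Fin s → Flagg r)
    (W : Submodule ℂ (Fin r → ℂ)) : ℝ :=
  ((finrank ℂ W : ℝ))⁻¹ * ∑ l, ∑ k ∈ Finset.range (finrank ℂ W), applyI (θ l) (posN (F l) W k)

end

noncomputable section HNProof
open Finset

variable {r s : ℕ}

lemma flagAt_succ (G : Flagg r) {j : ℕ} (h : j < r) : flagAt G (j+1) = G.F ⟨j, h⟩ := dif_pos h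

lemma flagAt_le_succ (G : Flagg r) (j : ℕ) : flagAt G j ≤ flagAt G (j+1) := by
  cases j with
  | zero => exact bot_le
  | succ k =>
    show flagAt G (k+1) ≤ flagAt G (k+1+1)
    by_cases h : k + 1 < r
    · rw [flagAt_succ G h, flagAt_succ G (by omega : k < r)]
      exact G.mono (by simp [Fin.le_def])
    · show flagAt G (k+1) ≤ dite _ _ _
      rw [dif_neg h]; exact le_top

lemma flagAt_mono (G : Flagg r) : Monotone (flagAt G) :=
  monotone_nat_of_le_succ (flagAt_le_succ G)

lemma finrank_flagAt (G : Flagg r) {j : ℕ} (hj : j ≤ r) : finrank ℂ (flagAt G j) = j := by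
  cases j with
  | zero => simp [flagAt]; exact Submodule.finrank_eq_zero.mpr rfl
  | succ k => rw [flagAt_succ G (by omega : k < r), G.rank_eq]

lemma flagAt_r_eq_top (G : Flagg r) (hr : 1 ≤ r) : flagAt G r = ⊤ := by
  apply Submodule.eq_top_of_finrank_eq
  rw [finrank_flagAt G le_rfl, Module.finrank_fin_fun]

/-- the dimension function `j ↦ dim (flagAt G j ⊓ W)` -/
def MM (G : Flagg r) (W : Submodule ℂ (Fin r → ℂ)) (j : ℕ) : ℕ :=
  finrank ℂ ↥(flagAt G j ⊓ W)

lemma MM_zero (G : Flagg r) (W : Submodule ℂ (Fin r → ℂ)) : MM G W 0 = 0 := by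
  simp [MM, flagAt]; exact Submodule.finrank_eq_zero.mpr (bot_inf_eq _)

lemma MM_mono (G : Flagg r) (W : Submodule ℂ (Fin r → ℂ)) : Monotone (MM G W) := fun a b hab =>
  Submodule.finrank_mono (inf_le_inf_right W (flagAt_mono G hab))

lemma MM_succ_le (G : Flagg r) (W : Submodule ℂ (Fin r → ℂ)) {j : ℕ} (hj : j < r) : MM G W (j+1) ≤ MM G W j + 1 := by
  have h1 : flagAt G j ⊔ (flagAt G (j+1) ⊓ W) ≤ flagAt G (j+1) :=
    sup_le (flagAt_le_succ G j) inf_le_left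
  have h2 : finrank ℂ ↥(flagAt G j ⊔ (flagAt G (j+1) ⊓ W)) ≤ j + 1 := by
    calc finrank ℂ ↥(flagAt G j ⊔ (flagAt G (j+1) ⊓ W)) ≤ finrank ℂ ↥(flagAt G (j+1)) :=
          Submodule.finrank_mono h1
      _ = j + 1 := finrank_flagAt G (by omega)
  have h3 := Submodule.finrank_sup_add_finrank_inf_eq (flagAt G j) (flagAt G (j+1) ⊓ W)
  have h4 : flagAt G j ⊓ (flagAt G (j+1) ⊓ W) = flagAt G j ⊓ W := by
    rw [← inf_assoc, inf_of_le_left (flagAt_le_succ G j)]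
  rw [h4] at h3
  have h5 : finrank ℂ ↥(flagAt G j) = j := finrank_flagAt G (by omega)
  unfold MM
  omega

lemma MM_r (G : Flagg r) (W : Submodule ℂ (Fin r → ℂ)) (hr : 1 ≤ r) : MM G W r = finrank ℂ W := by
  rw [MM, flagAt_r_eq_top G hr, top_inf_eq]

lemma MM_supermod (G : Flagg r) (W1 W2 : Submodule ℂ (Fin r → ℂ)) (j : ℕ) :
    MM G W1 j + MM G W2 j ≤ MM G (W1 ⊔ W2) j + MM G (W1 ⊓ W2) j := by
  set U := flagAt G j
  have h1 := Submodule.finrank_sup_add_finrank_inf_eq (U ⊓ W1) (U ⊓ W2)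
  have h2 : (U ⊓ W1) ⊓ (U ⊓ W2) = U ⊓ (W1 ⊓ W2) := (inf_inf_distrib_left U W1 W2).symm
  have h3 : (U ⊓ W1) ⊔ (U ⊓ W2) ≤ U ⊓ (W1 ⊔ W2) := by
    apply sup_le
    · exact inf_le_inf_left U le_sup_left
    · exact inf_le_inf_left U le_sup_right
  have h4 : finrank ℂ ↥((U ⊓ W1) ⊔ (U ⊓ W2)) ≤ finrank ℂ ↥(U ⊓ (W1 ⊔ W2)) :=
    Submodule.finrank_mono h3
  rw [h2] at h1
  show finrank ℂ ↥(U ⊓ W1) + finrank ℂ ↥(U ⊓ W2)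
    ≤ finrank ℂ ↥(U ⊓ (W1 ⊔ W2)) + finrank ℂ ↥(U ⊓ (W1 ⊓ W2))
  omega

/-- the set defining `posN` equals a friendlier one -/
lemma posN_eq (G : Flagg r) (W : Submodule ℂ (Fin r → ℂ)) (k : ℕ) :
    posN G W k = sInf {j : ℕ | j < r ∧ MM G W (j+1) = k + 1} := by
  unfold posN
  congr 1
  ext j
  constructor
  · rintro ⟨h, h2⟩; exact ⟨h, by rw [MM, flagAt_succ G h]; exact h2⟩
  · rintro ⟨h, h2⟩; exact ⟨h, by rw [MM, flagAt_succ G h] at h2; exact h2⟩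

lemma posN_spec (G : Flagg r) (W : Submodule ℂ (Fin r → ℂ)) {k : ℕ} (hk : k < finrank ℂ W) (hr : 1 ≤ r) :
    posN G W k < r ∧ MM G W (posN G W k + 1) = k + 1 ∧ MM G W (posN G W k) = k := by
  have hne : {j : ℕ | j < r ∧ MM G W (j+1) = k + 1}.Nonempty := by
    -- discrete IVT
    have hrT : r ∈ {t : ℕ | k + 1 ≤ MM G W t} := by
      simp only [Set.mem_setOf_eq, MM_r G W hr]; omega
    have hTne : {t : ℕ | k + 1 ≤ MM G W t}.Nonempty := ⟨r, hrT⟩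
    have htmem : sInf {t : ℕ | k + 1 ≤ MM G W t} ∈ _ := Nat.sInf_mem hTne
    have htr : sInf {t : ℕ | k + 1 ≤ MM G W t} ≤ r := Nat.sInf_le hrT
    have ht0 : sInf {t : ℕ | k + 1 ≤ MM G W t} ≠ 0 := by
      intro h0
      rw [h0] at htmem
      simp only [Set.mem_setOf_eq, MM_zero] at htmem
      omega
    obtain ⟨j, hj⟩ : ∃ j, sInf {t : ℕ | k + 1 ≤ MM G W t} = j + 1 :=
      ⟨sInf {t : ℕ | k + 1 ≤ MM G W t} - 1, by omega⟩
    have hjr : j < r := by omega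
    have hjlt : j ∉ {t : ℕ | k + 1 ≤ MM G W t} :=
      Nat.notMem_of_lt_sInf (by rw [hj]; omega)
    simp only [Set.mem_setOf_eq, not_le] at hjlt
    rw [hj] at htmem
    simp only [Set.mem_setOf_eq] at htmem
    have := MM_succ_le G W hjr
    exact ⟨j, hjr, by omega⟩
  rw [posN_eq]
  set p := sInf {j : ℕ | j < r ∧ MM G W (j+1) = k + 1} with hp
  have hmem : p ∈ _ := Nat.sInf_mem hne
  obtain ⟨hpr, hpv⟩ := hmem
  refine ⟨hpr, hpv, ?_⟩
  -- MM p = k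
  have hle : MM G W p ≤ MM G W (p+1) := MM_mono G W (by omega)
  have hstep := MM_succ_le G W hpr
  -- show MM p ≠ k+1, then by omega MM p = k since MM p ≤ k+1 and MM(p+1) ≤ MM p + 1
  have hne2 : MM G W p ≠ k + 1 := by
    intro heq
    rcases Nat.eq_zero_or_pos p with h0 | h0
    · rw [h0, MM_zero] at heq; omega
    · obtain ⟨q, hq⟩ : ∃ q, p = q + 1 := ⟨p - 1, by omega⟩
      rw [hq] at heq
      have hq2 : sInf {j : ℕ | j < r ∧ MM G W (j+1) = k + 1} ≤ q :=
        Nat.sInf_le ⟨by omega, heq⟩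
      rw [← hp] at hq2
      omega
  omega

lemma posN_of_jump (G : Flagg r) (W : Submodule ℂ (Fin r → ℂ)) (hr : 1 ≤ r) {j : ℕ} (hj : j < r)
    (hjump : MM G W (j+1) = MM G W j + 1) :
    MM G W j < finrank ℂ W ∧ posN G W (MM G W j) = j := by
  have hd : MM G W (j+1) ≤ finrank ℂ W := by
    rw [← MM_r G W hr]; exact MM_mono G W (by omega)
  have hk : MM G W j < finrank ℂ W := by omega
  refine ⟨hk, ?_⟩
  obtain ⟨h1, h2, h3⟩ := posN_spec G W hk hr
  have hple : posN G W (MM G W j) ≤ j := by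
    rw [posN_eq]
    exact Nat.sInf_le ⟨hj, hjump⟩
  by_contra hne'
  have hplt : posN G W (MM G W j) < j := by omega
  have : MM G W (posN G W (MM G W j) + 1) ≤ MM G W j := MM_mono G W (by omega)
  omega

lemma sum_pos_eq (G : Flagg r) (W : Submodule ℂ (Fin r → ℂ)) (g : Fin r → ℝ) (hr : 1 ≤ r) :
    ∑ k ∈ range (finrank ℂ W), applyI g (posN G W k)
      = ∑ j ∈ range r, applyI g j * ((MM G W (j+1) : ℝ) - (MM G W j : ℝ)) := by
  have h1 : ∑ k ∈ range (finrank ℂ W), applyI g (posN G W k)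
      = ∑ j ∈ (range r).filter (fun j => MM G W (j+1) = MM G W j + 1), applyI g j := by
    apply Finset.sum_bij' (i := fun k _ => posN G W k) (j := fun j _ => MM G W j)
    · intro k hk
      rw [mem_range] at hk
      obtain ⟨h1, h2, h3⟩ := posN_spec G W hk hr
      rw [mem_filter, mem_range]
      exact ⟨h1, by omega⟩
    · intro j hj
      rw [mem_filter, mem_range] at hj
      rw [mem_range]
      exact (posN_of_jump G W hr hj.1 hj.2).1
    · intro k hk
      rw [mem_range] at hk
      exact (posN_spec G W hk hr).2.2
    · intro j hj
      rw [mem_filter, mem_range] at hj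
      exact (posN_of_jump G W hr hj.1 hj.2).2
    · intro k hk; rfl
  rw [h1, Finset.sum_filter]
  apply Finset.sum_congr rfl
  intro j hj
  rw [mem_range] at hj
  have hle : MM G W j ≤ MM G W (j+1) := MM_mono G W (by omega)
  have hstep := MM_succ_le G W hj
  by_cases hc : MM G W (j+1) = MM G W j + 1
  · rw [if_pos hc, hc]
    push_cast
    ring
  · rw [if_neg hc]
    have : MM G W (j+1) = MM G W j := by omega
    rw [this]
    ring

/-- total `θ`-weight of a subspace -/
def Lam (θ : Fin s → Fin r → ℝ) (F : Fin s → Flagg r) (W : Submodule ℂ (Fin r → ℂ)) : ℝ :=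
  ∑ l, ∑ j ∈ range r, applyI (θ l) j * ((MM (F l) W (j+1) : ℝ) - (MM (F l) W j : ℝ))

lemma slopeW_eq_Lam (θ : Fin s → Fin r → ℝ) (F : Fin s → Flagg r) (W) (hr : 1 ≤ r) :
    slopeW θ F W = ((finrank ℂ W : ℝ))⁻¹ * Lam θ F W := by
  unfold slopeW Lam
  congr 1
  exact Finset.sum_congr rfl fun l _ => sum_pos_eq (F l) W (θ l) hr

lemma abel_sum (g M : ℕ → ℝ) (hM0 : M 0 = 0) (n : ℕ) :
    ∑ j ∈ range (n+1), g j * (M (j+1) - M j)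
      = g n * M (n+1) - ∑ j ∈ range n, (g (j+1) - g j) * M (j+1) := by
  induction n with
  | zero => simp [hM0]
  | succ n ih => rw [Finset.sum_range_succ, ih, Finset.sum_range_succ]; ring

lemma Lam_submod (θ : Fin s → Fin r → ℝ) (hθ : ∀ l, Monotone (θ l)) (F : Fin s → Flagg r)
    (hr : 1 ≤ r) (W1 W2 : Submodule ℂ (Fin r → ℂ)) :
    Lam θ F (W1 ⊔ W2) + Lam θ F (W1 ⊓ W2) ≤ Lam θ F W1 + Lam θ F W2 := by
  unfold Lam
  rw [← Finset.sum_add_distrib, ← Finset.sum_add_distrib]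
  apply Finset.sum_le_sum
  intro l _
  obtain ⟨q, rfl⟩ : ∃ q, r = q + 1 := ⟨r - 1, by omega⟩
  set G := F l
  set g : ℕ → ℝ := applyI (θ l) with hg
  have key : ∀ W : Submodule ℂ (Fin (q+1) → ℂ),
      ∑ j ∈ range (q+1), g j * ((MM G W (j+1) : ℝ) - (MM G W j : ℝ))
        = g q * (finrank ℂ W : ℝ) - ∑ j ∈ range q, (g (j+1) - g j) * (MM G W (j+1) : ℝ) := by
    intro W
    rw [abel_sum g (fun j => (MM G W j : ℝ)) (by simp [MM_zero]) q,
      MM_r G W (by omega)]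
  rw [key, key, key, key]
  have hrank : finrank ℂ ↥(W1 ⊔ W2) + finrank ℂ ↥(W1 ⊓ W2) = finrank ℂ W1 + finrank ℂ W2 :=
    Submodule.finrank_sup_add_finrank_inf_eq W1 W2
  have hrankR : (finrank ℂ ↥(W1 ⊔ W2) : ℝ) + (finrank ℂ ↥(W1 ⊓ W2) : ℝ)
      = (finrank ℂ W1 : ℝ) + (finrank ℂ W2 : ℝ) := by exact_mod_cast congrArg Nat.cast hrank
  have hsum : ∑ j ∈ range q, (g (j+1) - g j) * (MM G W1 (j+1) : ℝ)
      + ∑ j ∈ range q, (g (j+1) - g j) * (MM G W2 (j+1) : ℝ)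
      ≤ ∑ j ∈ range q, (g (j+1) - g j) * (MM G (W1 ⊔ W2) (j+1) : ℝ)
      + ∑ j ∈ range q, (g (j+1) - g j) * (MM G (W1 ⊓ W2) (j+1) : ℝ) := by
    rw [← Finset.sum_add_distrib, ← Finset.sum_add_distrib]
    apply Finset.sum_le_sum
    intro j hj
    rw [mem_range] at hj
    have hgpos : 0 ≤ g (j+1) - g j := by
      rw [hg]
      unfold applyI
      rw [dif_pos (by omega : j + 1 < q + 1), dif_pos (by omega : j < q + 1)]
      have := hθ l (show (⟨j, by omega⟩ : Fin (q+1)) ≤ ⟨j+1, by omega⟩ by simp [Fin.le_def])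
      linarith
    have hsm := MM_supermod G W1 W2 (j+1)
    have hsmR : (MM G W1 (j+1) : ℝ) + (MM G W2 (j+1) : ℝ)
        ≤ (MM G (W1 ⊔ W2) (j+1) : ℝ) + (MM G (W1 ⊓ W2) (j+1) : ℝ) := by exact_mod_cast hsm
    nlinarith [hgpos, hsmR]
  have h5 : g q * ((finrank ℂ ↥(W1 ⊔ W2) : ℝ) + (finrank ℂ ↥(W1 ⊓ W2) : ℝ))
      = g q * ((finrank ℂ W1 : ℝ) + (finrank ℂ W2 : ℝ)) := by rw [hrankR]
  linarith [hsum, h5]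

lemma Lam_bot (θ : Fin s → Fin r → ℝ) (F : Fin s → Flagg r) :
    Lam θ F (⊥ : Submodule ℂ (Fin r → ℂ)) = 0 := by
  unfold Lam MM
  rw [Finset.sum_eq_zero]
  intro l _
  rw [Finset.sum_eq_zero]
  intro j _
  rw [inf_bot_eq, finrank_bot]
  simp

lemma finrank_pos_of_ne_bot {W : Submodule ℂ (Fin r → ℂ)} (h : W ≠ ⊥) :
    0 < finrank ℂ W := by
  rcases Nat.eq_zero_or_pos (finrank ℂ W) with h0 | h0
  · exact absurd (Submodule.finrank_eq_zero.mp h0) h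
  · exact h0

lemma finrank_le_r (W : Submodule ℂ (Fin r → ℂ)) : finrank ℂ W ≤ r := by
  have := Submodule.finrank_le W
  rwa [Module.finrank_fin_fun] at this

lemma MM_lt (G : Flagg r) (W : Submodule ℂ (Fin r → ℂ)) (j : ℕ) : MM G W j < r + 1 := by
  have : MM G W j ≤ r := finrank_le_r _
  omega

lemma Lam_eq_of_slope (θ : Fin s → Fin r → ℝ) (F : Fin s → Flagg r) (hr : 1 ≤ r)
    {W : Submodule ℂ (Fin r → ℂ)} {x : ℝ} (hW : W ≠ ⊥) (h : slopeW θ F W = x) :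
    Lam θ F W = x * (finrank ℂ W : ℝ) := by
  have hd : (0 : ℝ) < (finrank ℂ W : ℝ) := by exact_mod_cast finrank_pos_of_ne_bot hW
  rw [slopeW_eq_Lam θ F W hr] at h
  field_simp at h
  linarith

lemma Lam_ge_of_slope_ge (θ : Fin s → Fin r → ℝ) (F : Fin s → Flagg r) (hr : 1 ≤ r)
    {W : Submodule ℂ (Fin r → ℂ)} {x : ℝ} (hW : W ≠ ⊥) (h : x ≤ slopeW θ F W) :
    x * (finrank ℂ W : ℝ) ≤ Lam θ F W := by
  have hd : (0 : ℝ) < (finrank ℂ W : ℝ) := by exact_mod_cast finrank_pos_of_ne_bot hW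
  rw [slopeW_eq_Lam θ F W hr] at h
  have h2 := mul_le_mul_of_nonneg_left h (le_of_lt hd)
  have h3 : (finrank ℂ W : ℝ) * (((finrank ℂ W : ℝ))⁻¹ * Lam θ F W) = Lam θ F W := by
    field_simp
  linarith

/-- finite profile function whose range contains all slopes -/
def GG (θ : Fin s → Fin r → ℝ) (p : Fin (r+1) × (Fin s → Fin (r+1) → Fin (r+1))) : ℝ :=
  ((p.1 : ℕ) : ℝ)⁻¹ * ∑ l, ∑ j ∈ range r, applyI (θ l) j *
    (((p.2 l (Fin.ofNat (r+1) (j+1)) : ℕ) : ℝ) - ((p.2 l (Fin.ofNat (r+1) j) : ℕ) : ℝ))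

lemma slopeW_mem_range (θ : Fin s → Fin r → ℝ) (F : Fin s → Flagg r)
    (W : Submodule ℂ (Fin r → ℂ)) (hr : 1 ≤ r) :
    slopeW θ F W ∈ Set.range (GG θ) := by
  refine ⟨(⟨finrank ℂ W, by have := finrank_le_r W; omega⟩,
    fun l t => ⟨MM (F l) W (t : ℕ), MM_lt (F l) W _⟩), ?_⟩
  rw [slopeW_eq_Lam θ F W hr]
  unfold GG Lam
  congr 1
  apply Finset.sum_congr rfl
  intro l _
  apply Finset.sum_congr rfl
  intro j hj
  rw [mem_range] at hj
  have e1 : (Fin.ofNat (r+1) (j+1)).val = j + 1 := Nat.mod_eq_of_lt (by omega)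
  have e2 : (Fin.ofNat (r+1) j).val = j := Nat.mod_eq_of_lt (by omega)
  simp only [e1, e2]

end HNProof

/-- **Harder–Narasimhan lemma.** Let `θ_l` be weakly increasing real `r`-tuples
and `𝐅` an `s`-tuple of complete flags on an `r`-dimensional space. Let `m_*` be
the minimal slope of a nonzero subspace and `d_*` the maximal dimension of a
nonzero subspace of slope `m_*`. Then there is a unique subspace `W_*` with
slope `m_*` and dimension `d_*`. -/
theorem harder_narasimhan (s r : ℕ) (hs : 2 ≤ s) (hr : 1 ≤ r)
    (θ : Fin s → Fin r → ℝ) (hθ : ∀ l, Monotone (θ l))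
    (F : Fin s → Flagg r) :
    ∃! W : Submodule ℂ (Fin r → ℂ),
      W ≠ ⊥ ∧
      slopeW θ F W =
        sInf {x : ℝ | ∃ W' : Submodule ℂ (Fin r → ℂ), W' ≠ ⊥ ∧ slopeW θ F W' = x} ∧
      finrank ℂ W =
        sSup {m : ℕ | ∃ W' : Submodule ℂ (Fin r → ℂ), W' ≠ ⊥ ∧
          slopeW θ F W' =
            sInf {x : ℝ | ∃ W'' : Submodule ℂ (Fin r → ℂ), W'' ≠ ⊥ ∧ slopeW θ F W'' = x} ∧
          finrank ℂ W' = m} := by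
  classical
  set S := {x : ℝ | ∃ W' : Submodule ℂ (Fin r → ℂ), W' ≠ ⊥ ∧ slopeW θ F W' = x} with hSdef
  have hSfin : S.Finite := by
    apply Set.Finite.subset (Set.finite_range (GG θ))
    rintro x ⟨W', _, rfl⟩
    exact slopeW_mem_range θ F W' hr
  have hSne : S.Nonempty := by
    refine ⟨slopeW θ F ⊤, ⊤, ?_, rfl⟩
    intro h
    have h1 : finrank ℂ (⊤ : Submodule ℂ (Fin r → ℂ)) = r := by
      rw [finrank_top, Module.finrank_fin_fun]
    rw [h, finrank_bot] at h1
    omega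
  have hmem : sInf S ∈ S := hSne.csInf_mem hSfin
  set m := sInf S with hmdef
  have hlb : ∀ W : Submodule ℂ (Fin r → ℂ), W ≠ ⊥ → m ≤ slopeW θ F W := fun W h =>
    csInf_le hSfin.bddBelow ⟨W, h, rfl⟩
  set D := {m' : ℕ | ∃ W' : Submodule ℂ (Fin r → ℂ), W' ≠ ⊥ ∧
      slopeW θ F W' = m ∧ finrank ℂ W' = m'} with hDdef
  have hDne : D.Nonempty := by
    obtain ⟨W0, hW0, hW0s⟩ := hmem
    exact ⟨finrank ℂ W0, W0, hW0, hW0s, rfl⟩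
  have hDbdd : BddAbove D := by
    refine ⟨r, ?_⟩
    rintro m' ⟨W', _, _, rfl⟩
    exact finrank_le_r W'
  have hdmem : sSup D ∈ D := Nat.sSup_mem hDne hDbdd
  obtain ⟨Wstar, hWs0, hWss, hWsd⟩ := hdmem
  refine ⟨Wstar, ⟨hWs0, hWss, hWsd⟩, ?_⟩
  rintro Y ⟨hY0, hYs, hYd⟩
  by_contra hne'
  have hdY : finrank ℂ Y = sSup D := hYd
  have hdW : finrank ℂ Wstar = sSup D := hWsd
  have hdpos : 0 < finrank ℂ Wstar := finrank_pos_of_ne_bot hWs0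
  -- the sup has strictly bigger dimension
  have hUfr : sSup D < finrank ℂ ↥(Y ⊔ Wstar) := by
    have h1 : finrank ℂ Y ≤ finrank ℂ ↥(Y ⊔ Wstar) := Submodule.finrank_mono le_sup_left
    rcases Nat.lt_or_ge (sSup D) (finrank ℂ ↥(Y ⊔ Wstar)) with h | h
    · exact h
    · exfalso
      have hYU : Y = Y ⊔ Wstar := Submodule.eq_of_le_of_finrank_le le_sup_left (by omega)
      have hWY : Wstar ≤ Y := by rw [hYU]; exact le_sup_right
      have : Wstar = Y := Submodule.eq_of_le_of_finrank_le hWY (by omega)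
      exact hne' this.symm
  have hrank : finrank ℂ ↥(Y ⊔ Wstar) + finrank ℂ ↥(Y ⊓ Wstar) = sSup D + sSup D := by
    have := Submodule.finrank_sup_add_finrank_inf_eq Y Wstar
    omega
  have hU0 : Y ⊔ Wstar ≠ ⊥ := by
    intro h
    exact hY0 (le_bot_iff.mp (h ▸ (le_sup_left : Y ≤ Y ⊔ Wstar)))
  have hLamY : Lam θ F Y = m * ((sSup D : ℕ) : ℝ) := by
    rw [Lam_eq_of_slope θ F hr hY0 hYs, hdY]
  have hLamW : Lam θ F Wstar = m * ((sSup D : ℕ) : ℝ) := by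
    rw [Lam_eq_of_slope θ F hr hWs0 hWss, hdW]
  have hLamU : m * (finrank ℂ ↥(Y ⊔ Wstar) : ℝ) ≤ Lam θ F (Y ⊔ Wstar) :=
    Lam_ge_of_slope_ge θ F hr hU0 (hlb _ hU0)
  have hLamI : m * (finrank ℂ ↥(Y ⊓ Wstar) : ℝ) ≤ Lam θ F (Y ⊓ Wstar) := by
    by_cases hI : Y ⊓ Wstar = ⊥
    · rw [hI, Lam_bot, finrank_bot]
      simp
    · exact Lam_ge_of_slope_ge θ F hr hI (hlb _ hI)
  have hsub := Lam_submod θ hθ F hr Y Wstar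
  have hcast : (finrank ℂ ↥(Y ⊔ Wstar) : ℝ) + (finrank ℂ ↥(Y ⊓ Wstar) : ℝ)
      = ((sSup D : ℕ) : ℝ) + ((sSup D : ℕ) : ℝ) := by exact_mod_cast congrArg Nat.cast hrank
  have hmc : m * ((finrank ℂ ↥(Y ⊔ Wstar) : ℝ) + (finrank ℂ ↥(Y ⊓ Wstar) : ℝ))
      = m * (((sSup D : ℕ) : ℝ) + ((sSup D : ℕ) : ℝ)) := by rw [hcast]
  have hLamUeq : Lam θ F (Y ⊔ Wstar) = m * (finrank ℂ ↥(Y ⊔ Wstar) : ℝ) := by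
    nlinarith [hLamU, hLamI, hsub, hmc, hLamY, hLamW]
  have hslopeU : slopeW θ F (Y ⊔ Wstar) = m := by
    rw [slopeW_eq_Lam θ F _ hr, hLamUeq]
    have hd : ((finrank ℂ ↥(Y ⊔ Wstar) : ℝ)) ≠ 0 := by
      have : 0 < finrank ℂ ↥(Y ⊔ Wstar) := by omega
      exact_mod_cast this.ne'
    field_simp
  have hUD : finrank ℂ ↥(Y ⊔ Wstar) ∈ D := ⟨Y ⊔ Wstar, hU0, hslopeU, rfl⟩
  have := le_csSup hDbdd hUD
  omega
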